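/- For all x, y ∈ M₀ₛₐ one has lim_{n→∞} χ(F_n(x)·F_n(y)) = ∑_{k∈ℤ} (χ(x·γ_k(y)) − χ(x)χ(y)) = s_χ(x,y) − i·σ_χ(x,y), where the sum has only finitely many nonzero terms. -/
import Mathlib


open Filter Topology

open scoped ComplexOrder

/-- The local fluctuation `F_{I_n}(x)` of `x` over the interval `I_n = [ia n, ib n]`. -/
noncomputable def Fn {A : Type*} [NormedRing A] [StarRing A] [NormedAlgebra ℂ A]
    [StarModule ℂ A] (γ : ℤ → A ≃⋆ₐ[ℂ] A) (χ : A →ₗ[ℂ] ℂ) (ia ib : ℕ → ℤ)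
    (n : ℕ) (x : A) : A :=
  (Real.sqrt ((Finset.Icc (ia n) (ib n)).card) : ℂ)⁻¹ •
    ∑ j ∈ Finset.Icc (ia n) (ib n), (γ j x - χ x • 1)

/-- The (finitely supported) covariance sum `∑_{k∈ℤ} (χ(x·γ_k(y)) − χ(x)χ(y))`. -/
noncomputable def covT {A : Type*} [NormedRing A] [StarRing A] [NormedAlgebra ℂ A]
    [StarModule ℂ A] (γ : ℤ → A ≃⋆ₐ[ℂ] A) (χ : A →ₗ[ℂ] ℂ) (x y : A) : ℂ :=
  ∑' k : ℤ, (χ (x * γ k y) - χ x * χ y)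

/-- The symmetric bilinear form `s_χ(x,y)`. -/
noncomputable def sChi {A : Type*} [NormedRing A] [StarRing A] [NormedAlgebra ℂ A]
    [StarModule ℂ A] (γ : ℤ → A ≃⋆ₐ[ℂ] A) (χ : A →ₗ[ℂ] ℂ) (x y : A) : ℝ :=
  (covT γ χ x y).re

/-- The symplectic form `σ_χ(x,y)`. -/
noncomputable def sigmaChi {A : Type*} [NormedRing A] [StarRing A] [NormedAlgebra ℂ A]
    [StarModule ℂ A] (γ : ℤ → A ≃⋆ₐ[ℂ] A) (χ : A →ₗ[ℂ] ℂ) (x y : A) : ℝ :=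
  -(covT γ χ x y).im


private lemma int_Icc_inter (a b c d : ℤ) :
    Finset.Icc a b ∩ Finset.Icc c d = Finset.Icc (max a c) (min b d) := by
  ext k
  simp only [Finset.mem_inter, Finset.mem_Icc]
  omega

theorem fluctuation_covariance_limit
    {A : Type*} [NormedRing A] [StarRing A] [CStarRing A] [NormedAlgebra ℂ A]
    [CompleteSpace A] [StarModule ℂ A]
    (M : ℤ → ℤ → Subalgebra ℂ A)
    (hmono : ∀ a b c d : ℤ, a ≤ b → c ≤ a → b ≤ d → M a b ≤ M c d)
    (hdense : Dense {x : A | ∃ a b : ℤ, a ≤ b ∧ x ∈ M a b})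
    (hcomm : ∀ a b c d : ℤ, a ≤ b → c ≤ d → (b < c ∨ d < a) →
      ∀ x ∈ M a b, ∀ y ∈ M c d, x * y = y * x)
    (γ : ℤ → A ≃⋆ₐ[ℂ] A)
    (hγ0 : ∀ x : A, γ 0 x = x)
    (hγadd : ∀ j k : ℤ, ∀ x : A, γ (j + k) x = γ j (γ k x))
    (hγM : ∀ j a b : ℤ, a ≤ b → ⇑(γ j) '' (M a b : Set A) = (M (a + j) (b + j) : Set A))
    (χ : A →ₗ[ℂ] ℂ)
    (hχ1 : χ 1 = 1)
    (hχpos : ∀ x : A, 0 ≤ χ (star x * x))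
    (hχinv : ∀ j : ℤ, ∀ x : A, χ (γ j x) = χ x)
    (hχmult : ∀ a b c d : ℤ, a ≤ b → c ≤ d → (b < c ∨ d < a) →
      ∀ x ∈ M a b, ∀ y ∈ M c d, χ (x * y) = χ x * χ y)
    (ia ib : ℕ → ℤ)
    (hI : ∀ n : ℕ, ia n ≤ ib n)
    (hImono : ∀ n : ℕ, ia (n + 1) ≤ ia n ∧ ib n ≤ ib (n + 1))
    (hIunion : ∀ k : ℤ, ∃ n : ℕ, ia n ≤ k ∧ k ≤ ib n)
    (x y : A)
    (hx : (∃ a b : ℤ, a ≤ b ∧ x ∈ M a b) ∧ IsSelfAdjoint x)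
    (hy : (∃ a b : ℤ, a ≤ b ∧ y ∈ M a b) ∧ IsSelfAdjoint y) :
    {k : ℤ | χ (x * γ k y) ≠ χ x * χ y}.Finite ∧
      Tendsto (fun n : ℕ => χ (Fn γ χ ia ib n x * Fn γ χ ia ib n y)) atTop
        (𝓝 (covT γ χ x y)) ∧
      covT γ χ x y = (sChi γ χ x y : ℂ) - Complex.I * (sigmaChi γ χ x y : ℂ) := by
  obtain ⟨⟨a, b, hab, hxM⟩, hxsa⟩ := hx
  obtain ⟨⟨c, d, hcd, hyM⟩, hysa⟩ := hy
  set g : ℤ → ℂ := fun k => χ (x * γ k y) - χ x * χ y with hgdef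
  set S : Finset ℤ := Finset.Icc (a - d) (b - c) with hSdef
  have hγy : ∀ k : ℤ, γ k y ∈ M (c + k) (d + k) := fun k => by
    have h := hγM k c d hcd
    have hmem : γ k y ∈ (⇑(γ k) '' (M c d : Set A)) := ⟨y, hyM, rfl⟩
    rwa [h] at hmem
  have hsupp : ∀ k ∉ S, g k = 0 := by
    intro k hk
    simp only [hSdef, Finset.mem_Icc, not_and_or, not_le] at hk
    have hsep : b < c + k ∨ d + k < a := by omega
    have hm := hχmult a b (c + k) (d + k) hab (by omega) hsep x hxM (γ k y) (hγy k)
    simp [hgdef, hm, hχinv k y]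
  have hfin : {k : ℤ | χ (x * γ k y) ≠ χ x * χ y}.Finite := by
    apply Set.Finite.subset S.finite_toSet
    intro k hk
    by_contra hkS
    exact hk (by have := hsupp k hkS; simpa [hgdef, sub_eq_zero] using this)
  have hcov : covT γ χ x y = ∑ m ∈ S, g m := by
    rw [covT]; exact tsum_eq_sum hsupp
  refine ⟨hfin, ?_, ?_⟩
  · -- the main limit
    have hterm : ∀ j l : ℤ, χ ((γ j x - χ x • (1 : A)) * (γ l y - χ y • 1)) = g (l - j) := by
      intro j l
      have h1 : γ j x * γ l y = γ j (x * γ (l - j) y) := by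
        rw [map_mul]
        congr 1
        rw [← hγadd]
        congr 1
        ring
      have h2 : χ (γ j x * γ l y) = χ (x * γ (l - j) y) := by rw [h1, hχinv]
      have h3 : χ (γ j x) = χ x := hχinv j x
      have h4 : χ (γ l y) = χ y := hχinv l y
      simp only [sub_mul, mul_sub, smul_mul_assoc, mul_smul_comm, one_mul, mul_one,
        map_sub, map_smul, smul_eq_mul, hχ1, h2, h3, h4, hgdef]
      ring
    have hkey : ∀ n : ℕ, χ (Fn γ χ ia ib n x * Fn γ χ ia ib n y)
        = (((Finset.Icc (ia n) (ib n)).card : ℂ))⁻¹ *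
          ∑ j ∈ Finset.Icc (ia n) (ib n), ∑ l ∈ Finset.Icc (ia n) (ib n), g (l - j) := by
      intro n
      have hc : ((Real.sqrt ((Finset.Icc (ia n) (ib n)).card) : ℂ))⁻¹ *
          ((Real.sqrt ((Finset.Icc (ia n) (ib n)).card) : ℂ))⁻¹
          = (((Finset.Icc (ia n) (ib n)).card : ℂ))⁻¹ := by
        rw [← mul_inv, ← Complex.ofReal_mul,
          Real.mul_self_sqrt (by positivity)]
        norm_num
      rw [Fn, Fn, smul_mul_smul_comm, map_smul, smul_eq_mul, hc, Finset.sum_mul_sum,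
        map_sum]
      congr 1
      refine Finset.sum_congr rfl fun j _ => ?_
      rw [map_sum]
      exact Finset.sum_congr rfl fun l _ => hterm j l
    have hdouble : ∀ n : ℕ,
        ∑ j ∈ Finset.Icc (ia n) (ib n), ∑ l ∈ Finset.Icc (ia n) (ib n), g (l - j)
        = ∑ m ∈ S, ((Finset.Icc (ia n) (ib n) ∩
            Finset.Icc (ia n - m) (ib n - m)).card : ℂ) * g m := by
      intro n
      have h1 : ∀ j : ℤ, ∑ l ∈ Finset.Icc (ia n) (ib n), g (l - j)
          = ∑ m ∈ S, if j ∈ Finset.Icc (ia n - m) (ib n - m) then g m else 0 := by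
        intro j
        have hmap : (Finset.Icc (ia n - j) (ib n - j)).map (addRightEmbedding j)
            = Finset.Icc (ia n) (ib n) := by
          rw [Finset.map_add_right_Icc]
          congr 1 <;> ring
        have e1 : ∑ l ∈ Finset.Icc (ia n) (ib n), g (l - j)
            = ∑ m ∈ Finset.Icc (ia n - j) (ib n - j), g m := by
          rw [← hmap, Finset.sum_map]
          refine Finset.sum_congr rfl fun m _ => ?_
          simp [addRightEmbedding]
        rw [e1]
        have e2 : ∑ m ∈ Finset.Icc (ia n - j) (ib n - j), g m
            = ∑ m ∈ Finset.Icc (ia n - j) (ib n - j) ∩ S, g m := by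
          refine (Finset.sum_subset Finset.inter_subset_left fun m hm hm2 => ?_).symm
          apply hsupp
          intro hmS
          exact hm2 (Finset.mem_inter.mpr ⟨hm, hmS⟩)
        rw [e2, Finset.inter_comm, ← Finset.sum_ite_mem]
        refine Finset.sum_congr rfl fun m _ => ?_
        congr 1
        simp only [Finset.mem_Icc]
        rw [eq_iff_iff]
        omega
      rw [Finset.sum_congr rfl fun j _ => h1 j, Finset.sum_comm]
      refine Finset.sum_congr rfl fun m _ => ?_
      rw [Finset.sum_ite_mem, Finset.sum_const, nsmul_eq_mul]
    -- divergence of interval lengths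
    have hiamono : Antitone ia := antitone_nat_of_succ_le fun n => (hImono n).1
    have hibmono : Monotone ib := monotone_nat_of_le_succ fun n => (hImono n).2
    have hN : Tendsto (fun n => (Finset.Icc (ia n) (ib n)).card) atTop atTop := by
      rw [tendsto_atTop_atTop]
      intro B
      obtain ⟨n1, hn1, _⟩ := hIunion (-(B : ℤ))
      obtain ⟨n2, _, hn2⟩ := hIunion (B : ℤ)
      refine ⟨max n1 n2, fun n hn => ?_⟩
      have h1 : ia n ≤ -(B : ℤ) := le_trans (hiamono (le_trans (le_max_left n1 n2) hn)) hn1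
      have h2 : (B : ℤ) ≤ ib n := le_trans hn2 (hibmono (le_trans (le_max_right n1 n2) hn))
      calc B ≤ (Finset.Icc (-(B : ℤ)) (B : ℤ)).card := by
              rw [Int.card_Icc]; omega
        _ ≤ (Finset.Icc (ia n) (ib n)).card :=
              Finset.card_le_card (Finset.Icc_subset_Icc h1 h2)
    have hNR : Tendsto (fun n => ((Finset.Icc (ia n) (ib n)).card : ℝ)) atTop atTop :=
      tendsto_natCast_atTop_atTop.comp hN
    have hcoef : ∀ m : ℤ, Tendsto (fun n =>
        (((Finset.Icc (ia n) (ib n) ∩ Finset.Icc (ia n - m) (ib n - m)).card : ℂ)) /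
          (((Finset.Icc (ia n) (ib n)).card : ℂ))) atTop (𝓝 1) := by
      intro m
      have hreal : Tendsto (fun n =>
          (((Finset.Icc (ia n) (ib n) ∩ Finset.Icc (ia n - m) (ib n - m)).card : ℝ)) /
            (((Finset.Icc (ia n) (ib n)).card : ℝ))) atTop (𝓝 1) := by
        have hlim : Tendsto (fun n => 1 - (m.natAbs : ℝ) / ((Finset.Icc (ia n) (ib n)).card : ℝ))
            atTop (𝓝 1) := by
          have := (hNR.const_div_atTop (m.natAbs : ℝ))
          have h2 := tendsto_const_nhds (x := (1 : ℝ)) (f := atTop (α := ℕ))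
          simpa using h2.sub this
        refine Tendsto.congr' ?_ hlim
        filter_upwards [hN.eventually (eventually_gt_atTop m.natAbs)] with n hn
        have hcard : (Finset.Icc (ia n) (ib n) ∩ Finset.Icc (ia n - m) (ib n - m)).card
            = (Finset.Icc (ia n) (ib n)).card - m.natAbs := by
          rw [int_Icc_inter, Int.card_Icc, Int.card_Icc] at *
          omega
        have hpos : (0 : ℝ) < ((Finset.Icc (ia n) (ib n)).card : ℝ) := by
          have : 0 < (Finset.Icc (ia n) (ib n)).card := lt_of_le_of_lt (Nat.zero_le _) hn
          exact_mod_cast this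
        rw [hcard, Nat.cast_sub hn.le, sub_div, div_self hpos.ne']
      have hC : Tendsto (fun n =>
          ((((Finset.Icc (ia n) (ib n) ∩ Finset.Icc (ia n - m) (ib n - m)).card : ℝ) /
            (((Finset.Icc (ia n) (ib n)).card : ℝ)) : ℝ) : ℂ)) atTop (𝓝 1) := by
        have h := (Complex.continuous_ofReal.tendsto 1).comp hreal
        simp only [Function.comp_def, Complex.ofReal_one] at h
        exact h
      refine hC.congr fun n => ?_
      push_cast
      ring
    rw [hcov]
    have hlim : Tendsto (fun n => ∑ m ∈ S,
        ((((Finset.Icc (ia n) (ib n) ∩ Finset.Icc (ia n - m) (ib n - m)).card : ℂ)) /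
          (((Finset.Icc (ia n) (ib n)).card : ℂ))) * g m) atTop (𝓝 (∑ m ∈ S, g m)) := by
      refine tendsto_finset_sum S fun m _ => ?_
      simpa using (hcoef m).mul_const (g m)
    refine Tendsto.congr (fun n => ?_) hlim
    rw [hkey, hdouble, Finset.mul_sum]
    refine Finset.sum_congr rfl fun m _ => ?_
    ring
  · simp [sChi, sigmaChi, Complex.ext_iff]
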